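/- For every B ∈ S^n, the cone J_0(B) = {X ∈ S^n_+ : ⟨B,X⟩ = 0} is ROG; that is, J_0(B) equals the convex hull of {x·xᵀ : x ∈ ℝ^n, xᵀ·B·x = 0}. -/

import Mathlib

open Matrix

noncomputable section

namespace Stmt12Aux

variable {n : ℕ} (B : Matrix (Fin n) (Fin n) ℝ)

/-- the quadratic form of `B` -/
def q (x : Fin n → ℝ) : ℝ := dotProduct x (B.mulVec x)

lemma trace_mul_vecMulVec (x : Fin n → ℝ) :
    (B * vecMulVec x x).trace = q B x := by
  simp only [q, Matrix.trace, Matrix.diag_apply, Matrix.mul_apply, vecMulVec_apply,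
    dotProduct, Matrix.mulVec]
  apply Finset.sum_congr rfl
  intro i _
  rw [Finset.mul_sum]
  apply Finset.sum_congr rfl
  intro j _
  ring

lemma rot_sum (a b : ℝ) (hab : a ^ 2 + b ^ 2 = 1) (x y : Fin n → ℝ) :
    vecMulVec (a • x + b • y) (a • x + b • y)
      + vecMulVec (-b • x + a • y) (-b • x + a • y)
      = vecMulVec x x + vecMulVec y y := by
  ext i j
  simp only [Matrix.add_apply, vecMulVec_apply, Pi.add_apply, Pi.smul_apply, smul_eq_mul,
    Pi.neg_apply, neg_mul, neg_smul]
  linear_combination (x i * x j + y i * y j) * hab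

lemma q_rot_sum (a b : ℝ) (hab : a ^ 2 + b ^ 2 = 1) (x y : Fin n → ℝ) :
    q B (a • x + b • y) + q B (-b • x + a • y) = q B x + q B y := by
  have h := congrArg (fun M => (B * M).trace) (rot_sum a b hab x y)
  simpa [Matrix.mul_add, Matrix.trace_add, trace_mul_vecMulVec] using h

lemma q_expand (a b : ℝ) (x y : Fin n → ℝ) :
    q B (a • x + b • y)
      = a ^ 2 * q B x
        + a * b * (dotProduct x (B.mulVec y) + dotProduct y (B.mulVec x))
        + b ^ 2 * q B y := by
  simp only [q, Matrix.mulVec_add, Matrix.mulVec_smul, dotProduct_add,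
    dotProduct_smul, add_dotProduct, smul_dotProduct, smul_eq_mul]
  ring

lemma q_smul (c : ℝ) (x : Fin n → ℝ) : q B (c • x) = c ^ 2 * q B x := by
  simp only [q, Matrix.mulVec_smul, dotProduct_smul, smul_dotProduct, smul_eq_mul]
  ring

lemma r_smul (c : ℝ) (x : Fin n → ℝ) :
    vecMulVec (c • x) (c • x) = (c ^ 2) • vecMulVec x x := by
  ext i j
  simp only [vecMulVec_apply, Pi.smul_apply, Matrix.smul_apply, smul_eq_mul]
  ring

lemma rotate (x y : Fin n → ℝ) (hx : 0 < q B x) (hy : q B y < 0) :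
    ∃ u v : Fin n → ℝ, q B u = 0 ∧ q B u + q B v = q B x + q B y ∧
      vecMulVec u u + vecMulVec v v = vecMulVec x x + vecMulVec y y := by
  set h : ℝ → ℝ := fun t => q B (Real.cos t • x + Real.sin t • y) with hh
  have hcont : Continuous h := by
    have : h = fun t => (Real.cos t) ^ 2 * q B x
        + Real.cos t * Real.sin t
            * (dotProduct x (B.mulVec y) + dotProduct y (B.mulVec x))
        + (Real.sin t) ^ 2 * q B y := by
      funext t; rw [hh]; exact q_expand B _ _ x y
    rw [this]; fun_prop
  have h0 : h 0 = q B x := by simp [hh]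
  have hpi : h (Real.pi / 2) = q B y := by simp [hh]
  have hmem : (0 : ℝ) ∈ Set.Icc (h (Real.pi / 2)) (h 0) := by
    rw [h0, hpi]; exact ⟨le_of_lt hy, le_of_lt hx⟩
  have hle : (0 : ℝ) ≤ Real.pi / 2 := by positivity
  obtain ⟨t, -, ht⟩ := intermediate_value_Icc' hle hcont.continuousOn hmem
  have hab : (Real.cos t) ^ 2 + (Real.sin t) ^ 2 = 1 := Real.cos_sq_add_sin_sq t
  exact ⟨Real.cos t • x + Real.sin t • y, -Real.sin t • x + Real.cos t • y, ht,
    q_rot_sum B _ _ hab x y, rot_sum _ _ hab x y⟩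

lemma sum_update_two {m : ℕ} {M : Type*} [AddCommGroup M] (f : Fin m → Fin n → ℝ)
    (i j : Fin m) (hij : i ≠ j) (u v : Fin n → ℝ) (φ : (Fin n → ℝ) → M) :
    ∑ k, φ (Function.update (Function.update f i u) j v k)
      = (∑ k, φ (f k)) + φ u + φ v - φ (f i) - φ (f j) := by
  have step1 : ∀ k, φ (Function.update (Function.update f i u) j v k)
      = Function.update (Function.update (fun k => φ (f k)) i (φ u)) j (φ v) k := by
    intro k
    by_cases hk : k = j
    · subst hk; simp
    · by_cases hk' : k = i
      · subst hk'
        rw [Function.update_of_ne hij, Function.update_self,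
          Function.update_of_ne hij, Function.update_self]
      · rw [Function.update_of_ne hk, Function.update_of_ne hk',
          Function.update_of_ne hk, Function.update_of_ne hk']
  rw [Finset.sum_congr rfl (fun k _ => step1 k)]
  rw [Finset.sum_update_of_mem (Finset.mem_univ j)]
  have hi' : i ∈ Finset.univ \ {j} := by
    simp [Finset.mem_sdiff, hij]
  rw [Finset.sum_update_of_mem hi']
  have hset : (Finset.univ \ {j}) \ {i} = Finset.univ \ ({i, j} : Finset (Fin m)) := by
    ext k
    simp only [Finset.mem_sdiff, Finset.mem_univ, Finset.mem_singleton, Finset.mem_insert,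
      true_and]
    tauto
  rw [hset, Finset.sum_sdiff_eq_sub (Finset.subset_univ _), Finset.sum_pair hij]
  abel

lemma fix_aux : ∀ (N : ℕ) (m : ℕ) (s : Finset (Fin m)) (f : Fin m → Fin n → ℝ),
    s.card ≤ N → (∀ i ∉ s, q B (f i) = 0) → (∑ i, q B (f i)) = 0 →
    ∃ g : Fin m → Fin n → ℝ, (∀ i, q B (g i) = 0) ∧
      (∑ i, vecMulVec (g i) (g i)) = ∑ i, vecMulVec (f i) (f i) := by
  intro N
  induction N with
  | zero =>
    intro m s f hcard hsupp _
    refine ⟨f, fun i => hsupp i ?_, rfl⟩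
    simp [Finset.card_eq_zero.mp (Nat.le_zero.mp hcard)]
  | succ N ih =>
    intro m s f hcard hsupp hsum
    by_cases hall : ∀ i, q B (f i) = 0
    · exact ⟨f, hall, rfl⟩
    push_neg at hall
    obtain ⟨i₀, hi₀⟩ := hall
    have hpos : ∃ i, 0 < q B (f i) := by
      by_contra hcon
      push_neg at hcon
      exact hi₀ ((Finset.sum_eq_zero_iff_of_nonpos (fun i _ => hcon i)).mp hsum i₀
        (Finset.mem_univ i₀))
    have hneg : ∃ j, q B (f j) < 0 := by
      by_contra hcon
      push_neg at hcon
      exact hi₀ ((Finset.sum_eq_zero_iff_of_nonneg (fun i _ => hcon i)).mp hsum i₀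
        (Finset.mem_univ i₀))
    obtain ⟨i, hi⟩ := hpos
    obtain ⟨j, hj⟩ := hneg
    have hij : i ≠ j := by
      intro hEq; rw [hEq] at hi; linarith
    have his : i ∈ s := by
      by_contra hcon; rw [hsupp i hcon] at hi; linarith
    have hjs : j ∈ s := by
      by_contra hcon; rw [hsupp j hcon] at hj; linarith
    obtain ⟨u, v, hu, huv, hsumuv⟩ := rotate B (f i) (f j) hi hj
    set f' := Function.update (Function.update f i u) j v with hf'
    have hf'i : f' i = u := by
      rw [hf', Function.update_of_ne hij, Function.update_self]
    have hf'k : ∀ k, k ≠ i → k ≠ j → f' k = f k := by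
      intro k hki hkj
      rw [hf', Function.update_of_ne hkj, Function.update_of_ne hki]
    have hcard' : (s.erase i).card ≤ N := by
      rw [Finset.card_erase_of_mem his]; omega
    have hsupp' : ∀ k ∉ s.erase i, q B (f' k) = 0 := by
      intro k hk
      rcases eq_or_ne k i with rfl | hki
      · rw [hf'i]; exact hu
      · have hks : k ∉ s := by
          intro hks; exact hk (Finset.mem_erase.mpr ⟨hki, hks⟩)
        have hkj : k ≠ j := by rintro rfl; exact hks hjs
        rw [hf'k k hki hkj]; exact hsupp k hks
    have hsum' : (∑ k, q B (f' k)) = 0 := by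
      rw [hf', sum_update_two f i j hij u v (q B), hsum]
      linarith
    obtain ⟨g, hg0, hgsum⟩ := ih m (s.erase i) f' hcard' hsupp' hsum'
    refine ⟨g, hg0, ?_⟩
    rw [hgsum, hf', sum_update_two f i j hij u v (fun x => vecMulVec x x)]
    rw [add_assoc ((∑ k, vecMulVec (f k) (f k))), hsumuv]
    abel

lemma herm_smul {A : Matrix (Fin n) (Fin n) ℝ} (h : A.IsHermitian) (a : ℝ) :
    (a • A).IsHermitian := by
  rw [Matrix.IsHermitian, Matrix.conjTranspose_smul, h, star_trivial]

lemma psd_vecMulVec (x : Fin n → ℝ) : (vecMulVec x x).PosSemidef := by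
  refine Matrix.PosSemidef.of_dotProduct_mulVec_nonneg ?_ ?_
  · ext i j
    simp [Matrix.conjTranspose_apply, vecMulVec_apply, mul_comm]
  · intro y
    have h1 : (vecMulVec x x) *ᵥ y = (dotProduct x y) • x := by
      funext i
      simp only [Matrix.mulVec, dotProduct, vecMulVec_apply, Pi.smul_apply,
        smul_eq_mul, Finset.sum_mul]
      apply Finset.sum_congr rfl
      intros
      ring
    rw [show star y = y from star_trivial y, h1, dotProduct_smul, smul_eq_mul,
      dotProduct_comm y x]
    exact mul_self_nonneg _

end Stmt12Aux

open Stmt12Aux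

/-- for every symmetric `B`, the cone `J_0(B)` is ROG. -/
theorem stmt_12 (n : ℕ) (B : Matrix (Fin n) (Fin n) ℝ) (hBsym : B.IsSymm) :
    {X : Matrix (Fin n) (Fin n) ℝ | X.PosSemidef ∧ (B * X).trace = 0} =
    convexHull ℝ {X | ∃ x : Fin n → ℝ,
      dotProduct x (B.mulVec x) = 0 ∧ X = vecMulVec x x} := by
  apply Set.Subset.antisymm
  · intro X hX
    obtain ⟨hpsd, htr⟩ := hX
    obtain ⟨C, hC⟩ : ∃ C : Matrix (Fin n) (Fin n) ℝ, X = star C * C := by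
      open scoped MatrixOrder Matrix.Norms.L2Operator in
      exact CStarAlgebra.nonneg_iff_eq_star_mul_self.mp hpsd.nonneg
    have hdecomp : X = ∑ i, vecMulVec (C i) (C i) := by
      rw [hC]
      ext j k
      simp [Matrix.mul_apply, Matrix.conjTranspose_apply, vecMulVec_apply, Matrix.sum_apply]
    have htrsum : ∑ i, q B (C i) = 0 := by
      have heq : (B * X).trace = ∑ i, q B (C i) := by
        rw [hdecomp, Matrix.mul_sum, Matrix.trace_sum]
        exact Finset.sum_congr rfl fun i _ => trace_mul_vecMulVec B (C i)
      rw [← heq]; exact htr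
    obtain ⟨g, hg0, hgsum⟩ := fix_aux B n n Finset.univ C (by simp) (fun i hi =>
      absurd (Finset.mem_univ i) hi) htrsum
    have hXg : X = ∑ i, vecMulVec (g i) (g i) := hdecomp.trans hgsum.symm
    rcases Nat.eq_zero_or_pos n with hn | hn
    · subst hn
      apply subset_convexHull
      refine ⟨0, by simp, ?_⟩
      ext i j
      exact absurd i.isLt (by omega)
    · have hnR : (0 : ℝ) < n := by exact_mod_cast hn
      have hmem : ∀ i : Fin n,
          vecMulVec (Real.sqrt n • g i) (Real.sqrt n • g i) ∈
            {X : Matrix (Fin n) (Fin n) ℝ | ∃ x : Fin n → ℝ,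
              dotProduct x (B.mulVec x) = 0 ∧ X = vecMulVec x x} := by
        intro i
        refine ⟨Real.sqrt n • g i, ?_, rfl⟩
        show q B (Real.sqrt n • g i) = 0
        rw [q_smul, hg0 i, mul_zero]
      have hkey := Finset.centerMass_mem_convexHull (Finset.univ : Finset (Fin n))
        (w := fun _ => (1 : ℝ)) (fun _ _ => zero_le_one)
        (by simp [hnR])
        (z := fun i => vecMulVec (Real.sqrt n • g i) (Real.sqrt n • g i))
        (fun i _ => hmem i)
      have hcm : Finset.centerMass (Finset.univ : Finset (Fin n)) (fun _ => (1 : ℝ))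
          (fun i => vecMulVec (Real.sqrt n • g i) (Real.sqrt n • g i)) = X := by
        rw [Finset.centerMass]
        simp only [Finset.sum_const, Finset.card_univ, Fintype.card_fin, nsmul_eq_mul,
          mul_one, one_smul]
        have hz : ∀ i : Fin n, vecMulVec (Real.sqrt n • g i) (Real.sqrt n • g i)
            = (n : ℝ) • vecMulVec (g i) (g i) := by
          intro i
          rw [r_smul, Real.sq_sqrt (by positivity : (0:ℝ) ≤ (n:ℝ))]
        rw [Finset.sum_congr rfl (fun i _ => hz i), ← Finset.smul_sum, ← hXg,
          smul_smul, inv_mul_cancel₀ (ne_of_gt hnR), one_smul]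
      rw [← hcm]
      exact hkey
  · apply convexHull_min
    · rintro Y ⟨x, hx, rfl⟩
      exact ⟨psd_vecMulVec x, by rw [trace_mul_vecMulVec]; exact hx⟩
    · rintro X ⟨hX1, hX2⟩ Y ⟨hY1, hY2⟩ a b ha hb hab
      refine ⟨Matrix.PosSemidef.of_dotProduct_mulVec_nonneg ((herm_smul hX1.1 a).add (herm_smul hY1.1 b)) ?_, ?_⟩
      · intro z
        have h1 := hX1.dotProduct_mulVec_nonneg z
        have h2 := hY1.dotProduct_mulVec_nonneg z
        simp only [Matrix.add_mulVec, Matrix.smul_mulVec, dotProduct_add,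
          dotProduct_smul, smul_eq_mul]
        exact add_nonneg (mul_nonneg ha h1) (mul_nonneg hb h2)
      · rw [Matrix.mul_add, Matrix.mul_smul, Matrix.mul_smul, Matrix.trace_add,
          Matrix.trace_smul, Matrix.trace_smul, hX2, hY2]
        simp
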